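/- Let G be a simple graph with a genuine pair {x,y} (non-adjacent, and no induced 2K₂ of G uses both x and y), and let g(G;xy) be the genuine contraction of G at {x,y}: delete x and y, add a new vertex w adjacent exactly to N_G(x) ∩ N_G(y). Then the independence complexes of g(G;xy) and of the edge contraction (Ind(G))_{xy} of the simplicial complex Ind(G) along the edge {x,y} are isomorphic as simplicial complexes. -/

import Mathlib

/-- The induced subgraph of `G` on the four distinct vertices `a,b,c,d` is isomorphic to
`2K₂`, with matching edges `ab` and `cd`. -/
def IsInduced2K2On {V : Type*} (G : SimpleGraph V) (a b c d : V) : Prop :=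
  a ≠ b ∧ a ≠ c ∧ a ≠ d ∧ b ≠ c ∧ b ≠ d ∧ c ≠ d ∧
    G.Adj a b ∧ G.Adj c d ∧
    ¬ G.Adj a c ∧ ¬ G.Adj a d ∧ ¬ G.Adj b c ∧ ¬ G.Adj b d

/-- `{x,y}` is a genuine pair in `G`: non-adjacent distinct vertices such that no induced
`2K₂` of `G` uses both `x` and `y`. -/
def IsGenuinePair {V : Type*} (G : SimpleGraph V) (x y : V) : Prop :=
  x ≠ y ∧ ¬ G.Adj x y ∧
    ¬ ∃ u v : V, u ∉ ({x, y} : Set V) ∧ v ∉ ({x, y} : Set V) ∧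
      ∃ a b c d : V, ({a, b, c, d} : Set V) = {x, y, u, v} ∧ IsInduced2K2On G a b c d

/-- The genuine contraction `g(G;xy)`: delete `x` and `y` and add a new vertex `w = none`
adjacent exactly to the common neighbors of `x` and `y`. -/
def gContraction {V : Type*} (G : SimpleGraph V) (x y : V) :
    SimpleGraph (Option {u : V // u ≠ x ∧ u ≠ y}) :=
  SimpleGraph.fromRel fun p q =>
    match p, q with
    | some u, some v => G.Adj u.1 v.1
    | some u, none => G.Adj x u.1 ∧ G.Adj y u.1
    | _, _ => False

/-- The vertex map `V → V(g(G;xy))` contracting `x` and `y` to the new vertex `none` and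
fixing all other vertices. -/
def contractFun {V : Type*} [DecidableEq V] (x y : V) (v : V) :
    Option {u : V // u ≠ x ∧ u ≠ y} :=
  if h : v ≠ x ∧ v ≠ y then some ⟨v, h⟩ else none

lemma gCon_adj_ss {V : Type*} (G : SimpleGraph V) (x y : V)
    (u v : {u : V // u ≠ x ∧ u ≠ y}) :
    (gContraction G x y).Adj (some u) (some v) ↔ u ≠ v ∧ G.Adj u.1 v.1 := by
  simp only [gContraction, SimpleGraph.fromRel_adj]
  constructor
  · rintro ⟨hne, hadj | hadj⟩
    · exact ⟨fun e => hne (by rw [e]), hadj⟩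
    · exact ⟨fun e => hne (by rw [e]), hadj.symm⟩
  · rintro ⟨hne, hadj⟩
    exact ⟨by simpa using hne, Or.inl hadj⟩

lemma gCon_adj_sn {V : Type*} (G : SimpleGraph V) (x y : V)
    (u : {u : V // u ≠ x ∧ u ≠ y}) :
    (gContraction G x y).Adj (some u) none ↔ G.Adj x u.1 ∧ G.Adj y u.1 := by
  simp [gContraction, SimpleGraph.fromRel_adj]

lemma gCon_adj_ns {V : Type*} (G : SimpleGraph V) (x y : V)
    (u : {u : V // u ≠ x ∧ u ≠ y}) :
    (gContraction G x y).Adj none (some u) ↔ G.Adj x u.1 ∧ G.Adj y u.1 := by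
  rw [SimpleGraph.adj_comm]; exact gCon_adj_sn G x y u

lemma key {V : Type*} [DecidableEq V] (G : SimpleGraph V) (x y z : V)
    (t : Finset (Option {u : V // u ≠ x ∧ u ≠ y}))
    (hz : ¬ (z ≠ x ∧ z ≠ y))
    (ht : ∀ a ∈ t, ∀ b ∈ t, ¬ (gContraction G x y).Adj a b)
    (hzt : none ∈ t → ∀ u : {u : V // u ≠ x ∧ u ≠ y}, some u ∈ t → ¬ G.Adj z u.1) :
    ∃ s : Finset V, (∀ a ∈ s, ∀ b ∈ s, ¬ G.Adj a b) ∧ t = s.image (contractFun x y) := by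
  classical
  refine ⟨t.image (fun o => o.elim z Subtype.val), ?_, ?_⟩
  · intro a ha b hb hadj
    simp only [Finset.mem_image] at ha hb
    obtain ⟨p, hp, rfl⟩ := ha
    obtain ⟨q, hq, rfl⟩ := hb
    match p, q with
    | none, none => exact G.loopless.irrefl z hadj
    | none, some v => exact hzt hp v hq hadj
    | some u, none => exact hzt hq u hp hadj.symm
    | some u, some v =>
      refine ht _ hp _ hq ((gCon_adj_ss G x y u v).2 ⟨?_, hadj⟩)
      intro e; rw [e] at hadj; exact G.loopless.irrefl _ hadj
  · rw [Finset.image_image]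
    conv_lhs => rw [(Finset.image_id (s := t)).symm]
    apply Finset.image_congr
    intro o ho
    match o with
    | none => simp [contractFun, hz]
    | some u => simp [contractFun, u.2]

/-- If `{x,y}` is a genuine pair of `G`, then the independence complex of the genuine
contraction `g(G;xy)` coincides (as a simplicial complex, i.e. face-by-face under the
canonical identification of vertices) with the edge contraction of `Ind(G)` along
`{x,y}` — whose faces are the images of the independent sets of `G` under `contractFun`. -/
theorem stmt_14 {V : Type*} [DecidableEq V] (G : SimpleGraph V) (x y : V)
    (h : IsGenuinePair G x y) :
    {t : Finset (Option {u : V // u ≠ x ∧ u ≠ y}) |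
        ∀ a ∈ t, ∀ b ∈ t, ¬ (gContraction G x y).Adj a b} =
      {t : Finset (Option {u : V // u ≠ x ∧ u ≠ y}) |
        ∃ s : Finset V, (∀ a ∈ s, ∀ b ∈ s, ¬ G.Adj a b) ∧
          t = s.image (contractFun x y)} := by
  classical
  obtain ⟨hxy, hnadj, h2k2⟩ := h
  ext t
  simp only [Set.mem_setOf_eq]
  constructor
  · intro ht
    by_cases hex : ∃ u : {u : V // u ≠ x ∧ u ≠ y}, some u ∈ t ∧ G.Adj x u.1
    · obtain ⟨u, hu, hxu⟩ := hex
      refine key G x y y t (by simp) ht ?_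
      intro hnone v hv hyv
      have hnyu : ¬ G.Adj y u.1 := fun hc =>
        ht _ hu _ hnone ((gCon_adj_sn G x y u).2 ⟨hxu, hc⟩)
      have hnxv : ¬ G.Adj x v.1 := fun hc =>
        ht _ hv _ hnone ((gCon_adj_sn G x y v).2 ⟨hc, hyv⟩)
      have huv : u.1 ≠ v.1 := fun e => hnxv (e ▸ hxu)
      have hnuv : ¬ G.Adj u.1 v.1 := fun hc =>
        ht _ hu _ hv ((gCon_adj_ss G x y u v).2 ⟨fun e => huv (congrArg Subtype.val e), hc⟩)
      exact absurd ⟨u.1, v.1, by simp [u.2.1, u.2.2], by simp [v.2.1, v.2.2],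
        x, u.1, y, v.1, by ext w; simp; tauto,
        u.2.1.symm, hxy, v.2.1.symm, u.2.2, huv, v.2.2.symm,
        hxu, hyv, hnadj, hnxv, fun hc => hnyu hc.symm, hnuv⟩ h2k2
    · push_neg at hex
      refine key G x y x t (by simp) ht ?_
      intro _ v hv hxv
      exact hex v hv hxv
  · rintro ⟨s, hs, rfl⟩
    intro a ha b hb hadj
    simp only [Finset.mem_image] at ha hb
    obtain ⟨p, hp, rfl⟩ := ha
    obtain ⟨q, hq, rfl⟩ := hb
    unfold contractFun at hadj
    by_cases hp' : p ≠ x ∧ p ≠ y <;> by_cases hq' : q ≠ x ∧ q ≠ y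
    · rw [dif_pos hp', dif_pos hq', gCon_adj_ss] at hadj
      exact hs p hp q hq hadj.2
    · rw [dif_pos hp', dif_neg hq', gCon_adj_sn] at hadj
      rcases not_and_or.1 hq' with h' | h' <;> push_neg at h' <;> subst h'
      · exact hs q hq p hp hadj.1
      · exact hs q hq p hp hadj.2
    · rw [dif_neg hp', dif_pos hq', gCon_adj_ns] at hadj
      rcases not_and_or.1 hp' with h' | h' <;> push_neg at h' <;> subst h'
      · exact hs p hp q hq hadj.1
      · exact hs p hp q hq hadj.2
    · rw [dif_neg hp', dif_neg hq'] at hadj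
      exact (gContraction G x y).loopless.irrefl _ hadj
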